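/- (Proposition 1(8): MStore is simulated by LStore followed by RFlush) For any machine i, any location x, any value v, and any configurations γ, γ': if γ ⇒^{LStore_i(x,v)·RFlush_i(x)} γ' (a transition labeled LStore_i(x,v), then one labeled RFlush_i(x), possibly interleaved with silent τ-steps), then γ ⇒^{MStore_i(x,v)} γ'. -/

import Mathlib

/-!  The CXL0 model.

We fix an abstract type `Machine` of machines, a type `Loc` of shared
locations, and a type `Val` of values with a distinguished value `z`
(playing the role of the value `0`).  The partition of `Loc` into the
pairwise disjoint sets `Loc_1, …, Loc_N` is encoded by an ownership map
`owner : Loc → Machine` (so `x ∈ Loc_k` iff `owner x = k`).  Volatility of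
each machine's memory is given by `vol : Machine → Bool` (`vol i = true`
means machine `i`'s memory is volatile).

A configuration `γ = (Cache, Mem)` is modeled by total maps
`cache : Machine → Loc → Option Val` (with `none` playing the role of `⊥`)
and `mem : Machine → Loc → Val` (the entries of `mem i` at locations not
owned by `i` are irrelevant; the transitions never consult them). -/

/-- Transition labels of the CXL0 labeled transition system. -/
inductive CXLLabel (Machine Loc Val : Type) : Type where
  | LStore (i : Machine) (x : Loc) (v : Val)
  | RStore (i : Machine) (x : Loc) (v : Val)
  | MStore (i : Machine) (x : Loc) (v : Val)
  | Load   (i : Machine) (x : Loc) (v : Val)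
  | LFlush (i : Machine) (x : Loc)
  | RFlush (i : Machine) (x : Loc)
  | GPF    (i : Machine)
  | Crash  (i : Machine)
  | tau

/-- Configurations of the CXL0 model. -/
structure CXLConfig (Machine Loc Val : Type) : Type where
  cache : Machine → Loc → Option Val
  mem   : Machine → Loc → Val

variable {Machine Loc Val : Type} [DecidableEq Machine] [DecidableEq Loc]

/-- Single labeled transition of the CXL0 model. -/
inductive CXLStep (owner : Loc → Machine) (vol : Machine → Bool) (z : Val) :
    CXLConfig Machine Loc Val → CXLLabel Machine Loc Val →
      CXLConfig Machine Loc Val → Prop where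
  | lstore (γ : CXLConfig Machine Loc Val) (i : Machine) (x : Loc) (v : Val) :
      CXLStep owner vol z γ (.LStore i x v)
        ⟨fun j y => if y = x then (if j = i then some v else none) else γ.cache j y,
         γ.mem⟩
  | rstore (γ : CXLConfig Machine Loc Val) (i : Machine) (x : Loc) (v : Val) :
      CXLStep owner vol z γ (.RStore i x v)
        ⟨fun j y => if y = x then (if j = owner x then some v else none) else γ.cache j y,
         γ.mem⟩
  | mstore (γ : CXLConfig Machine Loc Val) (i : Machine) (x : Loc) (v : Val) :
      CXLStep owner vol z γ (.MStore i x v)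
        ⟨fun j y => if y = x then none else γ.cache j y,
         fun j y => if j = owner x ∧ y = x then v else γ.mem j y⟩
  | load_cache (γ : CXLConfig Machine Loc Val) (i j : Machine) (x : Loc) (v : Val)
      (h : γ.cache j x = some v) :
      CXLStep owner vol z γ (.Load i x v)
        ⟨fun j' y => if j' = i ∧ y = x then some v else γ.cache j' y, γ.mem⟩
  | load_mem (γ : CXLConfig Machine Loc Val) (i : Machine) (x : Loc) (v : Val)
      (h : ∀ j, γ.cache j x = none) (hm : γ.mem (owner x) x = v) :
      CXLStep owner vol z γ (.Load i x v) γ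
  | lflush (γ : CXLConfig Machine Loc Val) (i : Machine) (x : Loc)
      (h : γ.cache i x = none) :
      CXLStep owner vol z γ (.LFlush i x) γ
  | rflush (γ : CXLConfig Machine Loc Val) (i : Machine) (x : Loc)
      (h : ∀ j, γ.cache j x = none) :
      CXLStep owner vol z γ (.RFlush i x) γ
  | gpf (γ : CXLConfig Machine Loc Val) (i : Machine)
      (h : ∀ j y, γ.cache j y = none) :
      CXLStep owner vol z γ (.GPF i) γ
  | prop_cache_cache (γ : CXLConfig Machine Loc Val) (i : Machine) (x : Loc) (v : Val)
      (hik : i ≠ owner x) (h : γ.cache i x = some v) :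
      CXLStep owner vol z γ .tau
        ⟨fun j y => if y = x then
            (if j = owner x then some v else if j = i then none else γ.cache j y)
          else γ.cache j y,
         γ.mem⟩
  | prop_cache_mem (γ : CXLConfig Machine Loc Val) (x : Loc) (v : Val)
      (h : γ.cache (owner x) x = some v) :
      CXLStep owner vol z γ .tau
        ⟨fun j y => if y = x then none else γ.cache j y,
         fun j y => if j = owner x ∧ y = x then v else γ.mem j y⟩
  | crash (γ : CXLConfig Machine Loc Val) (i : Machine) :
      CXLStep owner vol z γ (.Crash i)
        ⟨fun j y => if j = i then none else γ.cache j y,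
         fun j y => if j = i ∧ vol i then z else γ.mem j y⟩

/-- `CXLTrace owner vol z γ ls γ'` : `γ'` is reachable from `γ` by a sequence of
transitions labeled by the elements of `ls`, in this order, possibly interleaved
with additional silent `τ`-steps (this is the `γ ⇒^{α_1⋯α_n} γ'` relation). -/
inductive CXLTrace (owner : Loc → Machine) (vol : Machine → Bool) (z : Val) :
    CXLConfig Machine Loc Val → List (CXLLabel Machine Loc Val) →
      CXLConfig Machine Loc Val → Prop where
  | nil (γ : CXLConfig Machine Loc Val) : CXLTrace owner vol z γ [] γ
  | tau {γ γ' γ'' : CXLConfig Machine Loc Val} {ls : List (CXLLabel Machine Loc Val)}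
      (h : CXLStep owner vol z γ .tau γ') (ht : CXLTrace owner vol z γ' ls γ'') :
      CXLTrace owner vol z γ ls γ''
  | cons {γ γ' γ'' : CXLConfig Machine Loc Val} {l : CXLLabel Machine Loc Val}
      {ls : List (CXLLabel Machine Loc Val)}
      (h : CXLStep owner vol z γ l γ') (ht : CXLTrace owner vol z γ' ls γ'') :
      CXLTrace owner vol z γ (l :: ls) γ''

/-- Reachability by a (possibly empty) finite sequence of silent `τ`-steps. -/
def CXLTauSteps (owner : Loc → Machine) (vol : Machine → Bool) (z : Val) :
    CXLConfig Machine Loc Val → CXLConfig Machine Loc Val → Prop :=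
  Relation.ReflTransGen (fun a b => CXLStep owner vol z a .tau b)

/-- The initial configuration `γ_0`: all caches empty, all memories `0`. -/
def CXLInit (Machine Loc : Type) (z : Val) : CXLConfig Machine Loc Val :=
  ⟨fun _ _ => none, fun _ _ => z⟩

section Aux

variable (owner : Loc → Machine) (vol : Machine → Bool) (z : Val)

lemma CXLTrace.nil_inv {γ γ' : CXLConfig Machine Loc Val}
    (h : CXLTrace owner vol z γ [] γ') : CXLTauSteps owner vol z γ γ' := by
  generalize hls : ([] : List (CXLLabel Machine Loc Val)) = ls at h
  induction h with
  | nil => exact Relation.ReflTransGen.refl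
  | tau h _ ih => exact Relation.ReflTransGen.head h (ih hls)
  | cons h ht ih => cases hls

lemma CXLTrace.cons_inv {γ γ' : CXLConfig Machine Loc Val}
    {l : CXLLabel Machine Loc Val} {ls : List (CXLLabel Machine Loc Val)}
    (h : CXLTrace owner vol z γ (l :: ls) γ') :
    ∃ γ₁ γ₂, CXLTauSteps owner vol z γ γ₁ ∧ CXLStep owner vol z γ₁ l γ₂ ∧
      CXLTrace owner vol z γ₂ ls γ' := by
  generalize hl : l :: ls = L at h
  induction h with
  | nil => cases hl
  | tau h _ ih =>
      obtain ⟨a, b, hs, h1, h2⟩ := ih hl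
      exact ⟨a, b, Relation.ReflTransGen.head h hs, h1, h2⟩
  | cons h ht _ =>
      cases hl
      exact ⟨_, _, Relation.ReflTransGen.refl, h, ht⟩

lemma CXLTauSteps.trace {γ γ' γ'' : CXLConfig Machine Loc Val}
    {ls : List (CXLLabel Machine Loc Val)}
    (h : CXLTauSteps owner vol z γ γ') (ht : CXLTrace owner vol z γ' ls γ'') :
    CXLTrace owner vol z γ ls γ'' := by
  induction h using Relation.ReflTransGen.head_induction_on with
  | refl => exact ht
  | head hstep _ ih => exact .tau hstep ih

/-- Simulation invariant: `T` is the "flushed" shadow of `ε` with respect to a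
pending store of `v` at `x`. -/
def MSInv (owner : Loc → Machine) (x : Loc) (v : Val)
    (ε T : CXLConfig Machine Loc Val) : Prop :=
  ((∃ j, ε.cache j x = some v ∧ ∀ j', j' ≠ j → ε.cache j' x = none) ∧
    T = ⟨fun j y => if y = x then none else ε.cache j y,
         fun j y => if j = owner x ∧ y = x then v else ε.mem j y⟩) ∨
  ((∀ j, ε.cache j x = none) ∧ ε.mem (owner x) x = v ∧ T = ε)

lemma MSInv.step {x : Loc} {v : Val} {ε ε' T : CXLConfig Machine Loc Val}
    (hs : CXLStep owner vol z ε .tau ε') (hI : MSInv owner x v ε T) :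
    ∃ T', MSInv owner x v ε' T' ∧ CXLTauSteps owner vol z T T' := by
  cases hs with
  | prop_cache_cache i y w hik h =>
    by_cases hyx : y = x
    · subst hyx
      rcases hI with ⟨⟨j, hj, hothers⟩, hT⟩ | ⟨hall, _, _⟩
      · have hij : i = j := by
          by_contra hne
          rw [hothers i hne] at h
          exact nomatch h
        subst hij
        have hwv : w = v := by rw [h] at hj; exact (Option.some.injEq _ _ ▸ hj)
        subst hwv
        refine ⟨T, Or.inl ⟨⟨owner y, by simp, fun j' hj' => ?_⟩, ?_⟩,
          Relation.ReflTransGen.refl⟩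
        · by_cases hji : j' = i
          · simp [hji, hj', hik]
          · simp [hj', hji, hothers j' hji]
        · rw [hT]
          congr 1
          funext j' y'
          by_cases hy : y' = y <;> simp [hy]
      · rw [hall i] at h; exact nomatch h
    · have hxy : ¬ x = y := fun e => hyx e.symm
      rcases hI with ⟨⟨j, hj, hothers⟩, hT⟩ | ⟨hall, hmem, hT⟩
      · subst hT
        refine ⟨_, Or.inl ⟨⟨j, by simpa [hxy] using hj,
            fun j' hj' => by simpa [hxy] using hothers j' hj'⟩, ?_⟩,
          Relation.ReflTransGen.single
            (CXLStep.prop_cache_cache _ i y w hik (by simpa [hyx] using h))⟩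
        refine congrArg₂ CXLConfig.mk ?_ rfl
        funext j' y'
        by_cases hy' : y' = x
        · subst hy'; simp [Ne.symm hyx]
        · by_cases hyy : y' = y <;> simp [hy', hyy, hyx]
      · subst hT
        refine ⟨_, Or.inr ⟨fun j => by simp [hxy, hall j], hmem, rfl⟩,
          Relation.ReflTransGen.single
            (CXLStep.prop_cache_cache _ i y w hik h)⟩
  | prop_cache_mem y w h =>
    by_cases hyx : y = x
    · subst hyx
      rcases hI with ⟨⟨j, hj, hothers⟩, hT⟩ | ⟨hall, _, _⟩
      · have hoj : owner y = j := by
          by_contra hne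
          rw [hothers _ hne] at h
          exact nomatch h
        have hwv : w = v := by rw [hoj, hj] at h; exact (Option.some.injEq _ _ ▸ h).symm
        subst hwv
        refine ⟨T, Or.inr ⟨fun j' => by simp, by simp, ?_⟩,
          Relation.ReflTransGen.refl⟩
        rw [hT]
      · rw [hall (owner y)] at h; exact nomatch h
    · have hxy : ¬ x = y := fun e => hyx e.symm
      rcases hI with ⟨⟨j, hj, hothers⟩, hT⟩ | ⟨hall, hmem, hT⟩
      · subst hT
        refine ⟨_, Or.inl ⟨⟨j, by simpa [hxy] using hj,
            fun j' hj' => by simpa [hxy] using hothers j' hj'⟩, ?_⟩,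
          Relation.ReflTransGen.single
            (CXLStep.prop_cache_mem _ y w (by simpa [hyx] using h))⟩
        refine congrArg₂ CXLConfig.mk ?_ ?_
        · funext j' y'
          by_cases hy' : y' = x
          · subst hy'; simp [Ne.symm hyx]
          · by_cases hyy : y' = y <;> simp [hy', hyy, hyx]
        · funext j' y'
          by_cases hjy : j' = owner y ∧ y' = y
          · simp [hjy, hjy.2, hxy, hyx]
          · by_cases hjx : j' = owner x ∧ y' = x <;> simp [hjy, hjx, hxy]
      · subst hT
        refine ⟨_, Or.inr ⟨fun j => by simp [hxy, hall j],
            by simp [hxy, hmem], rfl⟩,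
          Relation.ReflTransGen.single (CXLStep.prop_cache_mem _ y w h)⟩

lemma MSInv.steps {x : Loc} {v : Val} {ε ε' T : CXLConfig Machine Loc Val}
    (hs : CXLTauSteps owner vol z ε ε') (hI : MSInv owner x v ε T) :
    ∃ T', MSInv owner x v ε' T' ∧ CXLTauSteps owner vol z T T' := by
  induction hs with
  | refl => exact ⟨T, hI, Relation.ReflTransGen.refl⟩
  | tail _ hstep ih =>
      obtain ⟨T₁, hI₁, hs₁⟩ := ih
      obtain ⟨T₂, hI₂, hs₂⟩ := MSInv.step owner vol z hstep hI₁
      exact ⟨T₂, hI₂, hs₁.trans hs₂⟩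

end Aux

/-- Proposition 1(8): `MStore` is simulated by `LStore` followed by `RFlush`. -/
theorem mstore_simulated_by_lstore_rflush
    (owner : Loc → Machine) (vol : Machine → Bool) (z : Val)
    (i : Machine) (x : Loc) (v : Val)
    (γ γ' : CXLConfig Machine Loc Val)
    (h : CXLTrace owner vol z γ [.LStore i x v, .RFlush i x] γ') :
    CXLTrace owner vol z γ [.MStore i x v] γ' := by
  obtain ⟨γ₁, δ, hτ1, hL, hrest⟩ := CXLTrace.cons_inv owner vol z h
  cases hL with
  | lstore _ _ _ =>
    obtain ⟨ε, ε₂, hτ2, hR, htail⟩ := CXLTrace.cons_inv owner vol z hrest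
    cases hR with
    | rflush _ _ hall =>
      have hτ3 : CXLTauSteps owner vol z ε γ' := CXLTrace.nil_inv owner vol z htail
      have hInv : MSInv owner x v
          (⟨fun j y => if y = x then (if j = i then some v else none)
              else γ₁.cache j y, γ₁.mem⟩ : CXLConfig Machine Loc Val)
          ⟨fun j y => if y = x then none else γ₁.cache j y,
           fun j y => if j = owner x ∧ y = x then v else γ₁.mem j y⟩ := by
        refine Or.inl ⟨⟨i, by simp, fun j' hj' => by simp [hj']⟩, ?_⟩
        congr 1
        funext j' y'
        by_cases hy : y' = x <;> simp [hy]
      obtain ⟨T', hInv', hsteps⟩ := MSInv.steps owner vol z hτ2 hInv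
      have hT' : T' = ε := by
        rcases hInv' with ⟨⟨j, hj, _⟩, _⟩ | ⟨_, _, hT⟩
        · rw [hall j] at hj; exact nomatch hj
        · exact hT
      subst hT'
      exact CXLTauSteps.trace owner vol z hτ1
        (CXLTrace.cons (CXLStep.mstore γ₁ i x v)
          (CXLTauSteps.trace owner vol z (hsteps.trans hτ3) (CXLTrace.nil γ')))
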